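/- Let f ∈ C^N(ℝ) with Θ := sup_{t∈ℝ} |f^{(N)}(t)| < ∞. Then for every j ∈ ℕ and k ∈ ℤ, the exact wavelet coefficient c_{j,k} = ∫_ℝ f(x) φ_{j,k}(x) dx, where φ_{j,k}(x) = 2^{j/2} φ(2^j x − k), satisfies |2^{j/2} c_{j,k} − f((k+M₁)/2^j)| ≤ 2^{−jN} · (Θ/N!) · ∫₀^{3N−1} |t − M₁|^N |φ(t)| dt; that is, up to an O(2^{−jN}) error the coefficient c_{j,k} equals the rescaled point value 2^{−j/2} f((k+M₁)/2^j). -/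

import Mathlib

open MeasureTheory


private lemma iterWithin_eq' {f : ℝ → ℝ} {n : ℕ} (hf : ContDiff ℝ (n : ℕ∞) f) {m : ℕ}
    (hmn : m ≤ n) {s : Set ℝ} (hs : UniqueDiffOn ℝ s) {x : ℝ} (hx : x ∈ s) :
    iteratedDerivWithin m f s x = iteratedDeriv m f x := by
  have h := (hf.contDiffOn (s := Set.univ)).ftaylorSeriesWithin uniqueDiffOn_univ
  have h2 := (h.mono (Set.subset_univ s)).eq_iteratedFDerivWithin_of_uniqueDiffOn
    (m := m) (by exact_mod_cast hmn) hs hx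
  rw [iteratedDerivWithin_eq_iteratedFDerivWithin, iteratedDeriv_eq_iteratedFDeriv, ← h2]
  simp [ftaylorSeriesWithin, iteratedFDerivWithin_univ]

private lemma taylor_bound_right' {f : ℝ → ℝ} {N : ℕ} (hN : 1 ≤ N) (hf : ContDiff ℝ (N : ℕ∞) f)
    {Θ : ℝ} (hΘ : ∀ t, |iteratedDeriv N f t| ≤ Θ) {x y : ℝ} (hxy : x < y) :
    |f y - ∑ m ∈ Finset.range N, iteratedDeriv m f x * (y - x) ^ m / m.factorial|
      ≤ Θ / N.factorial * |y - x| ^ N := by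
  obtain ⟨n, rfl⟩ : ∃ n, N = n + 1 := ⟨N - 1, (Nat.succ_pred_eq_of_pos hN).symm⟩
  have hu : UniqueDiffOn ℝ (Set.Icc x y) := uniqueDiffOn_Icc hxy
  have hfon : ContDiffOn ℝ n f (Set.Icc x y) :=
    (hf.of_le (by exact_mod_cast Nat.le_succ n)).contDiffOn
  have hdiff : Differentiable ℝ (iteratedDeriv n f) :=
    hf.differentiable_iteratedDeriv n (by exact_mod_cast Nat.lt_succ_self n)
  have hf' : DifferentiableOn ℝ (iteratedDerivWithin n f (Set.Icc x y)) (Set.Ioo x y) := by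
    apply (hdiff.differentiableOn (s := Set.Ioo x y)).congr
    intro z hz
    exact iterWithin_eq' hf (Nat.le_succ n) hu (Set.Ioo_subset_Icc_self hz)
  obtain ⟨x', hx', heq⟩ := taylor_mean_remainder_lagrange hxy.ne
    (by rwa [Set.uIcc_of_le hxy.le]) (by rwa [Set.uIcc_of_le hxy.le, Set.uIoo_of_le hxy.le])
  rw [Set.uIcc_of_le hxy.le] at heq
  rw [Set.uIoo_of_le hxy.le] at hx'
  have hT : taylorWithinEval f n (Set.Icc x y) x y =
      ∑ m ∈ Finset.range (n + 1), iteratedDeriv m f x * (y - x) ^ m / m.factorial := by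
    rw [taylor_within_apply]
    refine Finset.sum_congr rfl fun m hm => ?_
    rw [iterWithin_eq' hf (by have := Finset.mem_range.mp hm; omega) hu
      (Set.left_mem_Icc.mpr hxy.le)]
    simp [smul_eq_mul]
    ring
  rw [← hT, heq, iterWithin_eq' hf le_rfl hu (Set.Ioo_subset_Icc_self hx')]
  rw [abs_div, abs_mul, abs_pow, Nat.abs_cast]
  rw [div_mul_eq_mul_div]
  gcongr
  exact hΘ x'

private lemma taylor_bound' {f : ℝ → ℝ} {N : ℕ} (hN : 1 ≤ N) (hf : ContDiff ℝ (N : ℕ∞) f)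
    {Θ : ℝ} (hΘ : ∀ t, |iteratedDeriv N f t| ≤ Θ) (x y : ℝ) :
    |f y - ∑ m ∈ Finset.range N, iteratedDeriv m f x * (y - x) ^ m / m.factorial|
      ≤ Θ / N.factorial * |y - x| ^ N := by
  rcases lt_trichotomy x y with h | h | h
  · exact taylor_bound_right' hN hf hΘ h
  · subst h
    have hs : ∑ m ∈ Finset.range N, iteratedDeriv m f x * (x - x) ^ m / m.factorial = f x := by
      rw [Finset.sum_eq_single 0]
      · simp
      · intro m _ hm0
        simp [sub_self, zero_pow hm0]
      · intro h; exact absurd (Finset.mem_range.mpr (by omega)) h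
    rw [hs]
    simp [sub_self, zero_pow (by omega : N ≠ 0)]
  · -- x > y : reflect
    set g : ℝ → ℝ := fun t => f (-t) with hg
    have hgc : ContDiff ℝ (N : ℕ∞) g := hf.comp contDiff_neg
    have hΘg : ∀ t, |iteratedDeriv N g t| ≤ Θ := by
      intro t
      rw [hg, iteratedDeriv_comp_neg]
      rw [smul_eq_mul, abs_mul, abs_pow, abs_neg, abs_one, one_pow, one_mul]
      exact hΘ (-t)
    have key := taylor_bound_right' hN hgc hΘg (show -x < -y by linarith)
    have e0 : g (-y) = f y := by simp [hg]
    have e1 : ∀ m ∈ Finset.range N,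
        iteratedDeriv m g (-x) * (-y - -x) ^ m / m.factorial
          = iteratedDeriv m f x * (y - x) ^ m / m.factorial := by
      intro m _
      have h2 : ((-1 : ℝ)) ^ m * (-(y - x)) ^ m = (y - x) ^ m := by
        rw [show -(y - x) = (-1 : ℝ) * (y - x) from (neg_one_mul _).symm, mul_pow,
          ← mul_assoc, ← pow_add, Even.neg_one_pow ⟨m, rfl⟩, one_mul]
      rw [hg, iteratedDeriv_comp_neg, smul_eq_mul, neg_neg,
        show (-y - -x) = -(y - x) by ring,
        show (-1 : ℝ) ^ m * iteratedDeriv m f x * (-(y - x)) ^ m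
            = iteratedDeriv m f x * ((-1 : ℝ) ^ m * (-(y - x)) ^ m) by ring, h2]
    rw [e0, Finset.sum_congr rfl e1, show |-y - -x| = |y - x| by rw [abs_sub_comm]; ring_nf] at key
    exact key

theorem wavelet_coefficient_approx_point_value
    (N : ℕ) (hN : 2 ≤ N) (M₁ : ℝ) (φ : ℝ → ℝ)
    (hφmeas : Measurable φ) (hφbdd : ∃ B, ∀ t, |φ t| ≤ B)
    (hφsupp : ∀ t : ℝ, t ∉ Set.Icc (0 : ℝ) (3 * N - 1) → φ t = 0)
    (hφint : ∫ t : ℝ, φ t = 1)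
    (hmom : ∀ m : ℕ, 1 ≤ m → m ≤ N - 1 → ∫ t : ℝ, (t - M₁) ^ m * φ t = 0)
    (f : ℝ → ℝ) (hf : ContDiff ℝ (N : ℕ∞) f)
    (Θ : ℝ) (hΘ : IsLUB (Set.range fun t => |iteratedDeriv N f t|) Θ)
    (j : ℕ) (k : ℤ)
    (c : ℝ) (hc : c = ∫ x : ℝ, f x * ((2 : ℝ) ^ ((j : ℝ) / 2) * φ (2 ^ j * x - (k : ℝ)))) :
    |(2 : ℝ) ^ ((j : ℝ) / 2) * c - f (((k : ℝ) + M₁) / 2 ^ j)| ≤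
      ((2 : ℝ) ^ (j * N))⁻¹ * (Θ / N.factorial) *
        ∫ t in (0 : ℝ)..(3 * (N : ℝ) - 1), |t - M₁| ^ N * |φ t| := by
  obtain ⟨B, hB⟩ := hφbdd
  have hNr : (2 : ℝ) ≤ (N : ℝ) := by exact_mod_cast hN
  have hend : (0 : ℝ) ≤ 3 * (N : ℝ) - 1 := by linarith
  have h2j : (0 : ℝ) < 2 ^ j := by positivity
  set x₀ : ℝ := ((k : ℝ) + M₁) / 2 ^ j with hx₀
  -- integrability builder
  have hφI : ∀ ψ : ℝ → ℝ, Continuous ψ → Integrable (fun t => ψ t * φ t) := by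
    intro ψ hψ
    obtain ⟨C, hC⟩ := (isCompact_Icc (a := (0 : ℝ)) (b := 3 * N - 1)).exists_bound_of_continuousOn
      hψ.continuousOn
    have hon : IntegrableOn (fun t => ψ t * φ t) (Set.Icc (0 : ℝ) (3 * N - 1)) := by
      apply Measure.integrableOn_of_bounded (M := C * B) measure_Icc_lt_top.ne
        ((hψ.measurable.mul hφmeas).aestronglyMeasurable)
      refine (ae_restrict_iff' measurableSet_Icc).2 (Filter.Eventually.of_forall fun t ht => ?_)
      have h1 : ‖ψ t‖ ≤ C := hC t ht
      have h2 : |φ t| ≤ B := hB t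
      calc ‖ψ t * φ t‖ = ‖ψ t‖ * |φ t| := by rw [norm_mul]; rfl
        _ ≤ C * B := mul_le_mul h1 h2 (abs_nonneg _) ((norm_nonneg _).trans h1)
    exact hon.integrable_of_forall_notMem_eq_zero fun t ht => by rw [hφsupp t ht, mul_zero]
  -- step 1 : change of variables
  have step1 : (2 : ℝ) ^ ((j : ℝ) / 2) * c = ∫ t : ℝ, f ((t + k) / 2 ^ j) * φ t := by
    rw [hc, show (fun x : ℝ => f x * ((2 : ℝ) ^ ((j : ℝ) / 2) * φ (2 ^ j * x - (k : ℝ))))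
        = fun x => (2 : ℝ) ^ ((j : ℝ) / 2) * (f x * φ (2 ^ j * x - (k : ℝ)))
      from funext fun x => by ring, integral_const_mul, ← mul_assoc]
    have hrw : (2 : ℝ) ^ ((j : ℝ) / 2) * (2 : ℝ) ^ ((j : ℝ) / 2) = (2 : ℝ) ^ j := by
      rw [← Real.rpow_natCast 2 j, ← Real.rpow_add two_pos]
      norm_num
    rw [hrw]
    set F : ℝ → ℝ := fun t => f ((t + k) / 2 ^ j) * φ t with hF
    have hcomp : (fun x : ℝ => f x * φ (2 ^ j * x - (k : ℝ)))
        = fun x => (fun y => F (y - k)) ((2 : ℝ) ^ j * x) := by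
      funext x
      simp only [F]
      rw [show ((2 : ℝ) ^ j * x - (k : ℝ) + (k : ℝ)) / 2 ^ j = x by field_simp; ring]
    rw [hcomp, MeasureTheory.Measure.integral_comp_mul_left (fun y => F (y - (k : ℝ))) ((2 : ℝ) ^ j),
      integral_sub_right_eq_self F ((k : ℝ)), smul_eq_mul,
      abs_of_pos (inv_pos.mpr h2j), ← mul_assoc, mul_inv_cancel₀ h2j.ne', one_mul]
  -- Taylor data
  set g : ℝ → ℝ := fun t => f ((t + k) / 2 ^ j) with hgdef
  set P : ℝ → ℝ := fun t =>
    ∑ m ∈ Finset.range N, iteratedDeriv m f x₀ * ((t - M₁) / 2 ^ j) ^ m / m.factorial with hP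
  have hΘ' : ∀ t, |iteratedDeriv N f t| ≤ Θ := fun t => hΘ.1 ⟨t, rfl⟩
  have hΘ0 : 0 ≤ Θ := (abs_nonneg _).trans (hΘ' 0)
  have hyx : ∀ t : ℝ, (t + (k : ℝ)) / 2 ^ j - x₀ = (t - M₁) / 2 ^ j := by
    intro t; rw [hx₀]; field_simp; ring
  have hpt : ∀ t : ℝ, |g t - P t| ≤ Θ / N.factorial * (|t - M₁| / 2 ^ j) ^ N := by
    intro t
    have h := taylor_bound' (by omega : 1 ≤ N) hf hΘ' x₀ ((t + (k : ℝ)) / 2 ^ j)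
    rw [hyx t] at h
    have habs : |(t - M₁) / 2 ^ j| = |t - M₁| / 2 ^ j := by
      rw [abs_div, abs_of_pos h2j]
    rw [habs] at h
    exact h
  -- continuity
  have hgc : Continuous g := hf.continuous.comp ((continuous_id.add continuous_const).div_const _)
  have hPc : Continuous P := by
    apply continuous_finset_sum
    intro m _
    exact (continuous_const.mul
      (((continuous_id.sub continuous_const).div_const _).pow m)).div_const _
  -- step 2 : polynomial part integrates to f x₀
  have step2 : ∫ t : ℝ, P t * φ t = f x₀ := by
    have hexp : (fun t : ℝ => P t * φ t) = fun t =>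
        ∑ m ∈ Finset.range N,
          (iteratedDeriv m f x₀ / (m.factorial * (2 ^ j) ^ m)) * ((t - M₁) ^ m * φ t) := by
      funext t
      rw [hP, Finset.sum_mul]
      refine Finset.sum_congr rfl fun m _ => ?_
      rw [div_pow]
      ring
    rw [hexp, integral_finset_sum]
    · rw [Finset.sum_eq_single 0]
      · simp only [pow_zero, one_mul, Nat.factorial_zero, Nat.cast_one, mul_one,
          iteratedDeriv_zero, div_one]
        rw [integral_const_mul, hφint, mul_one]
      · intro m hm hm0
        rw [integral_const_mul,
          hmom m (Nat.one_le_iff_ne_zero.mpr hm0) (Nat.le_pred_of_lt (Finset.mem_range.mp hm)),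
          mul_zero]
      · intro h; exact absurd (Finset.mem_range.mpr (by omega)) h
    · intro m _
      exact (hφI (fun t => (t - M₁) ^ m) ((continuous_id.sub continuous_const).pow m)).const_mul _
  -- assemble
  have key : (2 : ℝ) ^ ((j : ℝ) / 2) * c - f x₀ = ∫ t : ℝ, (g t - P t) * φ t := by
    rw [step1, ← step2, ← integral_sub (hφI g hgc) (hφI P hPc)]
    exact integral_congr_ae (Filter.Eventually.of_forall fun t => by simp [hgdef]; ring)
  rw [key]
  -- rewrite the interval integral as an integral over ℝ
  have hA : (∫ t in (0 : ℝ)..(3 * (N : ℝ) - 1), |t - M₁| ^ N * |φ t|)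
      = ∫ t : ℝ, |t - M₁| ^ N * |φ t| := by
    rw [intervalIntegral.integral_of_le hend, ← integral_Icc_eq_integral_Ioc]
    exact setIntegral_eq_integral_of_forall_compl_eq_zero fun t ht => by
      rw [hφsupp t ht, abs_zero, mul_zero]
  rw [hA]
  have hintabs : Integrable (fun t => |t - M₁| ^ N * |φ t|) := by
    have h := (hφI (fun t => (t - M₁) ^ N) ((continuous_id.sub continuous_const).pow N)).abs
    simpa [abs_mul, abs_pow] using h
  have hintgP : Integrable (fun t => |(g t - P t) * φ t|) :=
    (hφI (fun t => g t - P t) (hgc.sub hPc)).abs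
  calc |∫ t : ℝ, (g t - P t) * φ t| ≤ ∫ t : ℝ, |(g t - P t) * φ t| := by
        simpa [abs_mul] using norm_integral_le_integral_norm (μ := volume) (fun t => (g t - P t) * φ t)
    _ ≤ ∫ t : ℝ, (Θ / N.factorial * ((2 : ℝ) ^ (j * N))⁻¹) * (|t - M₁| ^ N * |φ t|) := by
        apply integral_mono hintgP (hintabs.const_mul _)
        intro t
        have h1 : |(g t - P t) * φ t| ≤ (Θ / N.factorial * (|t - M₁| / 2 ^ j) ^ N) * |φ t| := by
          rw [abs_mul]
          exact mul_le_mul_of_nonneg_right (hpt t) (abs_nonneg _)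
        refine h1.trans (le_of_eq ?_)
        rw [div_pow, pow_mul, ← pow_mul 2 j N]
        field_simp
    _ = ((2 : ℝ) ^ (j * N))⁻¹ * (Θ / N.factorial) * ∫ t : ℝ, |t - M₁| ^ N * |φ t| := by
        rw [integral_const_mul]
        ring
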